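/- Let (𝔥*[1] ⊕ 𝔥; 𝔩_1, 𝔩_2, 𝒮) be a quadratic strict Lie 2-algebra, and let A ∈ Ω^1(M, 𝔥), B ∈ Ω^2(M, 𝔥*) be a Γ-connection on a manifold M. Then the 5-form 𝒮(fcurv(A,B), curv(A,B)) is exact; explicitly, 𝒮(fcurv(A,B), curv(A,B)) = d( 𝒮(A, dB) + 𝒮((1/2)𝔩_2(A,A), B) − (1/2)𝒮(𝔩_1(B), B) ), where fcurv(A,B) = dA + (1/2)𝔩_2(A,A) − 𝔩_1(B) and curv(A,B) = dB + 𝔩_2(A,B). -/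

import Mathlib

/-- Covariant exterior differential of a `k`-form (modelled as a function on tuples of
vector fields) with respect to a connection-type operator `nab`. -/
def dNab {V E : Type*} [LieRing V] [AddCommGroup E]
    (nab : V → E → E) {k : ℕ} (θ : (Fin k → V) → E) :
    (Fin (k + 1) → V) → E :=
  fun Xs =>
    (∑ i : Fin (k + 1), ((-1 : ℤ) ^ (i : ℕ)) • nab (Xs i) (θ (Xs ∘ i.succAbove)))
      + ∑ i : Fin (k + 1), ∑ j : Fin (k + 1),
          if h : (i : ℕ) < (j : ℕ) then
            ((-1 : ℤ) ^ (j : ℕ)) • θ (Function.update (Xs ∘ j.succAbove)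
              ⟨(i : ℕ), by have hj := j.isLt; omega⟩ ⁅Xs i, Xs j⁆)
          else 0

set_option maxHeartbeats 4000000 in
theorem dNab_five {V E : Type*} [LieRing V] [AddCommGroup E] (nab : V → E → E)
    (θ : (Fin 4 → V) → E) (x1 x2 x3 x4 x5 : V) :
    dNab nab θ ![x1,x2,x3,x4,x5] =
      nab x1 (θ ![x2,x3,x4,x5]) - nab x2 (θ ![x1,x3,x4,x5]) + nab x3 (θ ![x1,x2,x4,x5])
        - nab x4 (θ ![x1,x2,x3,x5]) + nab x5 (θ ![x1,x2,x3,x4])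
      - θ ![⁅x1,x2⁆,x3,x4,x5] + θ ![⁅x1,x3⁆,x2,x4,x5] - θ ![⁅x1,x4⁆,x2,x3,x5]
      + θ ![⁅x1,x5⁆,x2,x3,x4] + θ ![x1,⁅x2,x3⁆,x4,x5] - θ ![x1,⁅x2,x4⁆,x3,x5]
      + θ ![x1,⁅x2,x5⁆,x3,x4] - θ ![x1,x2,⁅x3,x4⁆,x5] + θ ![x1,x2,⁅x3,x5⁆,x4]
      + θ ![x1,x2,x3,⁅x4,x5⁆] := by
  have h : dNab nab θ ![x1,x2,x3,x4,x5] =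
    (∑ i : Fin 5, ((-1:ℤ)^(i:ℕ)) • nab (![x1,x2,x3,x4,x5] i) (θ (![x1,x2,x3,x4,x5] ∘ i.succAbove)))
    + ∑ i : Fin 5, ∑ j : Fin 5, (if h : (i:ℕ) < (j:ℕ) then ((-1:ℤ)^(j:ℕ)) • θ (Function.update (![x1,x2,x3,x4,x5] ∘ j.succAbove) ⟨(i:ℕ), by omega⟩ ⁅![x1,x2,x3,x4,x5] i, ![x1,x2,x3,x4,x5] j⁆) else 0) := rfl
  have c1 : (![x1,x2,x3,x4,x5] ∘ (0 : Fin 5).succAbove) = ![x2,x3,x4,x5] := by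
    funext i; fin_cases i <;> rfl
  have c2 : (![x1,x2,x3,x4,x5] ∘ (1 : Fin 5).succAbove) = ![x1,x3,x4,x5] := by
    funext i; fin_cases i <;> rfl
  have c3 : (![x1,x2,x3,x4,x5] ∘ (2 : Fin 5).succAbove) = ![x1,x2,x4,x5] := by
    funext i; fin_cases i <;> rfl
  have c4 : (![x1,x2,x3,x4,x5] ∘ (3 : Fin 5).succAbove) = ![x1,x2,x3,x5] := by
    funext i; fin_cases i <;> rfl
  have c5 : (![x1,x2,x3,x4,x5] ∘ (4 : Fin 5).succAbove) = ![x1,x2,x3,x4] := by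
    funext i; fin_cases i <;> rfl
  have u0 : ∀ (a b c d v : V), Function.update ![a,b,c,d] (0 : Fin 4) v = ![v,b,c,d] := by
    intro a b c d v; funext i; fin_cases i <;> simp
  have u1 : ∀ (a b c d v : V), Function.update ![a,b,c,d] (1 : Fin 4) v = ![a,v,c,d] := by
    intro a b c d v; funext i; fin_cases i <;> simp
  have u2 : ∀ (a b c d v : V), Function.update ![a,b,c,d] (2 : Fin 4) v = ![a,b,v,d] := by
    intro a b c d v; funext i; fin_cases i <;> simp
  have u3 : ∀ (a b c d v : V), Function.update ![a,b,c,d] (3 : Fin 4) v = ![a,b,c,v] := by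
    intro a b c d v; funext i; fin_cases i <;> simp
  rw [h]
  simp only [Fin.sum_univ_five, c1, c2, c3, c4, c5]
  norm_num [show ((0:Fin 5):ℕ) = 0 from rfl, show ((1:Fin 5):ℕ) = 1 from rfl,
    show ((2:Fin 5):ℕ) = 2 from rfl, show ((3:Fin 5):ℕ) = 3 from rfl,
    show ((4:Fin 5):ℕ) = 4 from rfl]
  norm_num [show ((0:Fin 5):ℕ) = 0 from rfl, show ((1:Fin 5):ℕ) = 1 from rfl,
    show ((2:Fin 5):ℕ) = 2 from rfl, show ((3:Fin 5):ℕ) = 3 from rfl,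
    show ((4:Fin 5):ℕ) = 4 from rfl,
    show ((0:ℕ) : Fin 4) = 0 from rfl,
    u0, u1, u2, u3]
  simp only [show (⟨(2:ℕ), by omega⟩ : Fin 4) = 2 from rfl,
    show (⟨(3:ℕ), by omega⟩ : Fin 4) = 3 from rfl, u2, u3]
  simp only [Matrix.cons_val]
  abel

set_option maxHeartbeats 16000000 in
/-- for a `Γ`-connection `(A,B)` with values in a quadratic strict Lie
2-algebra, the 5-form `𝒮(fcurv(A,B), curv(A,B))` is exact, with explicit primitive
`𝒮(A, dB) + 𝒮((1/2)𝔩₂(A,A), B) − (1/2)𝒮(𝔩₁(B), B)`. -/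
theorem first_pontryagin_form_of_connection_is_exact
    (V R H0 H1 : Type) [LieRing V] [Module ℝ V]
    [AddCommGroup R] [Module ℝ R]
    [AddCommGroup H0] [Module ℝ H0] [AddCommGroup H1] [Module ℝ H1]
    -- vector fields act on functions
    (act : V → R →ₗ[ℝ] R)
    (hact : ∀ (X Y : V) (f : R), act ⁅X, Y⁆ f = act X (act Y f) - act Y (act X f))
    -- Lie derivatives on 𝔥- and 𝔥*-valued functions
    (L0 : V → H0 →ₗ[ℝ] H0) (L1 : V → H1 →ₗ[ℝ] H1)
    (hL0 : ∀ (X Y : V) (a : H0), L0 ⁅X, Y⁆ a = L0 X (L0 Y a) - L0 Y (L0 X a))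
    (hL1 : ∀ (X Y : V) (m : H1), L1 ⁅X, Y⁆ m = L1 X (L1 Y m) - L1 Y (L1 X m))
    -- the quadratic strict Lie 2-algebra structure (𝔥*[1] ⊕ 𝔥; 𝔩₁, 𝔩₂, 𝒮)
    (l1 : H1 →ₗ[ℝ] H0) (l2 : H0 →ₗ[ℝ] H0 →ₗ[ℝ] H0) (l2m : H0 →ₗ[ℝ] H1 →ₗ[ℝ] H1)
    (hl2skew : ∀ a b : H0, l2 a b = - l2 b a)
    (hchain1 : ∀ (a : H0) (m : H1), l1 (l2m a m) = l2 a (l1 m))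
    (hchain2 : ∀ m p : H1, l2m (l1 m) p = - l2m (l1 p) m)
    (hjac0 : ∀ a b c : H0, l2 a (l2 b c) = l2 (l2 a b) c + l2 b (l2 a c))
    (hjacm : ∀ (a b : H0) (m : H1), l2m a (l2m b m) = l2m (l2 a b) m + l2m b (l2m a m))
    (hder0 : ∀ (X : V) (a b : H0), L0 X (l2 a b) = l2 (L0 X a) b + l2 a (L0 X b))
    (hder1 : ∀ (X : V) (a : H0) (m : H1), L1 X (l2m a m) = l2m (L0 X a) m + l2m a (L1 X m))
    (hcomm : ∀ (X : V) (m : H1), L0 X (l1 m) = l1 (L1 X m))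
    -- the invariant pairing 𝒮
    (S : H0 →ₗ[ℝ] H1 →ₗ[ℝ] R)
    (hSL : ∀ (X : V) (a : H0) (m : H1),
      act X (S a m) = S (L0 X a) m + S a (L1 X m))
    (hSl1 : ∀ m p : H1, S (l1 m) p = S (l1 p) m)
    (hSinv : ∀ (a b : H0) (m : H1), S (l2 a b) m = - S b (l2m a m))
    -- the Γ-connection (A, B)
    (A : V →ₗ[ℝ] H0) (B : V →ₗ[ℝ] V →ₗ[ℝ] H1)
    (hBskew : ∀ X Y : V, B X Y = - B Y X)
    -- dB
    (dB : V → V → V → H1)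
    (hdB : ∀ X Y Z : V, dB X Y Z =
      L1 X (B Y Z) - L1 Y (B X Z) + L1 Z (B X Y)
        - B ⁅X, Y⁆ Z + B ⁅X, Z⁆ Y - B ⁅Y, Z⁆ X)
    -- fcurv(A,B) = dA + (1/2)𝔩₂(A,A) − 𝔩₁(B)
    (Fc : V → V → H0)
    (hFc : ∀ X Y : V, Fc X Y =
      L0 X (A Y) - L0 Y (A X) - A ⁅X, Y⁆ + l2 (A X) (A Y) - l1 (B X Y))
    -- curv(A,B) = dB + 𝔩₂(A,B)
    (Cv : V → V → V → H1)
    (hCv : ∀ X Y Z : V, Cv X Y Z =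
      dB X Y Z + l2m (A X) (B Y Z) - l2m (A Y) (B X Z) + l2m (A Z) (B X Y))
    -- the primitive 4-form 𝒮(A, dB) + 𝒮((1/2)𝔩₂(A,A), B) − (1/2)𝒮(𝔩₁(B), B)
    (P4 : (Fin 4 → V) → R)
    (hP4 : ∀ Xs : Fin 4 → V, P4 Xs =
      (S (A (Xs 0)) (dB (Xs 1) (Xs 2) (Xs 3)) - S (A (Xs 1)) (dB (Xs 0) (Xs 2) (Xs 3))
        + S (A (Xs 2)) (dB (Xs 0) (Xs 1) (Xs 3)) - S (A (Xs 3)) (dB (Xs 0) (Xs 1) (Xs 2)))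
      + (S (l2 (A (Xs 0)) (A (Xs 1))) (B (Xs 2) (Xs 3))
          - S (l2 (A (Xs 0)) (A (Xs 2))) (B (Xs 1) (Xs 3))
          + S (l2 (A (Xs 0)) (A (Xs 3))) (B (Xs 1) (Xs 2))
          + S (l2 (A (Xs 1)) (A (Xs 2))) (B (Xs 0) (Xs 3))
          - S (l2 (A (Xs 1)) (A (Xs 3))) (B (Xs 0) (Xs 2))
          + S (l2 (A (Xs 2)) (A (Xs 3))) (B (Xs 0) (Xs 1)))
      - ((1 : ℝ) / 2) •
          (S (l1 (B (Xs 0) (Xs 1))) (B (Xs 2) (Xs 3))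
            - S (l1 (B (Xs 0) (Xs 2))) (B (Xs 1) (Xs 3))
            + S (l1 (B (Xs 0) (Xs 3))) (B (Xs 1) (Xs 2))
            + S (l1 (B (Xs 1) (Xs 2))) (B (Xs 0) (Xs 3))
            - S (l1 (B (Xs 1) (Xs 3))) (B (Xs 0) (Xs 2))
            + S (l1 (B (Xs 2) (Xs 3))) (B (Xs 0) (Xs 1)))) :
    -- 𝒮(fcurv, curv) = d(𝒮(A,dB) + 𝒮((1/2)𝔩₂(A,A),B) − (1/2)𝒮(𝔩₁(B),B))
    ∀ x1 x2 x3 x4 x5 : V,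
      S (Fc x1 x2) (Cv x3 x4 x5) - S (Fc x1 x3) (Cv x2 x4 x5)
        + S (Fc x1 x4) (Cv x2 x3 x5) - S (Fc x1 x5) (Cv x2 x3 x4)
        + S (Fc x2 x3) (Cv x1 x4 x5) - S (Fc x2 x4) (Cv x1 x3 x5)
        + S (Fc x2 x5) (Cv x1 x3 x4) + S (Fc x3 x4) (Cv x1 x2 x5)
        - S (Fc x3 x5) (Cv x1 x2 x4) + S (Fc x4 x5) (Cv x1 x2 x3)
      = dNab (fun X f => act X f) P4 ![x1, x2, x3, x4, x5] := by
  intro x1 x2 x3 x4 x5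
  have jacgen : ∀ u v w : V, ⁅⁅u,v⁆,w⁆ = ⁅⁅w,v⁆,u⁆ - ⁅⁅w,u⁆,v⁆ := by
    intro u v w
    rw [← lie_skew ⁅u,v⁆ w, leibniz_lie, ← lie_skew ⁅w,v⁆ u]; abel
  have lsw : ∀ u v w : V, ⁅u, ⁅v, w⁆⁆ = -⁅⁅v, w⁆, u⁆ := fun u v w => (lie_skew u ⁅v,w⁆).symm
  have gsw : ∀ (a b : H0) (m : H1), S b (l2m a m) = -S a (l2m b m) := by
    intro a b m
    have h1 := hSinv a b m
    have h2 := hSinv b a m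
    rw [hl2skew, map_neg, LinearMap.neg_apply, h2, neg_neg] at h1
    rw [h1, neg_neg]
  have Glem : ∀ (a b c : H0) (m : H1),
      S a (l2m b (l2m c m)) = S c (l2m b (l2m a m)) - S c (l2m a (l2m b m)) := by
    intro a b c m
    rw [hjacm b c m, map_add, gsw (l2 b c) a m, hSinv b c (l2m a m), gsw c a (l2m b m)]
    abel
  have jv0 : ⁅⁅x2, x3⁆, x1⁆ = ⁅⁅x1, x3⁆, x2⁆ - ⁅⁅x1, x2⁆, x3⁆ := jacgen x2 x3 x1
  have jv1 : ⁅⁅x2, x4⁆, x1⁆ = ⁅⁅x1, x4⁆, x2⁆ - ⁅⁅x1, x2⁆, x4⁆ := jacgen x2 x4 x1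
  have jv2 : ⁅⁅x2, x5⁆, x1⁆ = ⁅⁅x1, x5⁆, x2⁆ - ⁅⁅x1, x2⁆, x5⁆ := jacgen x2 x5 x1
  have jv3 : ⁅⁅x3, x4⁆, x1⁆ = ⁅⁅x1, x4⁆, x3⁆ - ⁅⁅x1, x3⁆, x4⁆ := jacgen x3 x4 x1
  have jv4 : ⁅⁅x3, x5⁆, x1⁆ = ⁅⁅x1, x5⁆, x3⁆ - ⁅⁅x1, x3⁆, x5⁆ := jacgen x3 x5 x1
  have jv5 : ⁅⁅x4, x5⁆, x1⁆ = ⁅⁅x1, x5⁆, x4⁆ - ⁅⁅x1, x4⁆, x5⁆ := jacgen x4 x5 x1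
  have jv6 : ⁅⁅x3, x4⁆, x2⁆ = ⁅⁅x2, x4⁆, x3⁆ - ⁅⁅x2, x3⁆, x4⁆ := jacgen x3 x4 x2
  have jv7 : ⁅⁅x3, x5⁆, x2⁆ = ⁅⁅x2, x5⁆, x3⁆ - ⁅⁅x2, x3⁆, x5⁆ := jacgen x3 x5 x2
  have jv8 : ⁅⁅x4, x5⁆, x2⁆ = ⁅⁅x2, x5⁆, x4⁆ - ⁅⁅x2, x4⁆, x5⁆ := jacgen x4 x5 x2
  have jv9 : ⁅⁅x4, x5⁆, x3⁆ = ⁅⁅x3, x5⁆, x4⁆ - ⁅⁅x3, x4⁆, x5⁆ := jacgen x4 x5 x3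
  have bs0 : B (⁅x2, x3⁆) (⁅x1, x4⁆) = -B (⁅x1, x4⁆) (⁅x2, x3⁆) := hBskew _ _
  have bs1 : B (⁅x2, x3⁆) (⁅x1, x5⁆) = -B (⁅x1, x5⁆) (⁅x2, x3⁆) := hBskew _ _
  have bs2 : B (⁅x2, x4⁆) (⁅x1, x3⁆) = -B (⁅x1, x3⁆) (⁅x2, x4⁆) := hBskew _ _
  have bs3 : B (⁅x2, x4⁆) (⁅x1, x5⁆) = -B (⁅x1, x5⁆) (⁅x2, x4⁆) := hBskew _ _
  have bs4 : B (⁅x2, x5⁆) (⁅x1, x3⁆) = -B (⁅x1, x3⁆) (⁅x2, x5⁆) := hBskew _ _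
  have bs5 : B (⁅x2, x5⁆) (⁅x1, x4⁆) = -B (⁅x1, x4⁆) (⁅x2, x5⁆) := hBskew _ _
  have bs6 : B (⁅x3, x4⁆) (⁅x1, x2⁆) = -B (⁅x1, x2⁆) (⁅x3, x4⁆) := hBskew _ _
  have bs7 : B (⁅x3, x4⁆) (⁅x1, x5⁆) = -B (⁅x1, x5⁆) (⁅x3, x4⁆) := hBskew _ _
  have bs8 : B (⁅x3, x4⁆) (⁅x2, x5⁆) = -B (⁅x2, x5⁆) (⁅x3, x4⁆) := hBskew _ _
  have bs9 : B (⁅x3, x5⁆) (⁅x1, x2⁆) = -B (⁅x1, x2⁆) (⁅x3, x5⁆) := hBskew _ _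
  have bs10 : B (⁅x3, x5⁆) (⁅x1, x4⁆) = -B (⁅x1, x4⁆) (⁅x3, x5⁆) := hBskew _ _
  have bs11 : B (⁅x3, x5⁆) (⁅x2, x4⁆) = -B (⁅x2, x4⁆) (⁅x3, x5⁆) := hBskew _ _
  have bs12 : B (⁅x4, x5⁆) (⁅x1, x2⁆) = -B (⁅x1, x2⁆) (⁅x4, x5⁆) := hBskew _ _
  have bs13 : B (⁅x4, x5⁆) (⁅x1, x3⁆) = -B (⁅x1, x3⁆) (⁅x4, x5⁆) := hBskew _ _
  have bs14 : B (⁅x4, x5⁆) (⁅x2, x3⁆) = -B (⁅x2, x3⁆) (⁅x4, x5⁆) := hBskew _ _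
  have bs15 : B (x1) (⁅x2, x3⁆) = -B (⁅x2, x3⁆) (x1) := hBskew _ _
  have bs16 : B (x1) (⁅x2, x4⁆) = -B (⁅x2, x4⁆) (x1) := hBskew _ _
  have bs17 : B (x1) (⁅x2, x5⁆) = -B (⁅x2, x5⁆) (x1) := hBskew _ _
  have bs18 : B (x1) (⁅x3, x4⁆) = -B (⁅x3, x4⁆) (x1) := hBskew _ _
  have bs19 : B (x1) (⁅x3, x5⁆) = -B (⁅x3, x5⁆) (x1) := hBskew _ _
  have bs20 : B (x1) (⁅x4, x5⁆) = -B (⁅x4, x5⁆) (x1) := hBskew _ _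
  have bs21 : B (x2) (⁅x3, x4⁆) = -B (⁅x3, x4⁆) (x2) := hBskew _ _
  have bs22 : B (x2) (⁅x3, x5⁆) = -B (⁅x3, x5⁆) (x2) := hBskew _ _
  have bs23 : B (x2) (⁅x4, x5⁆) = -B (⁅x4, x5⁆) (x2) := hBskew _ _
  have bs24 : B (x3) (⁅x4, x5⁆) = -B (⁅x4, x5⁆) (x3) := hBskew _ _
  have sw0 : ∀ m : H1, S (A (x3)) (l2m (A (⁅x1, x2⁆)) m) = -S (A (⁅x1, x2⁆)) (l2m (A (x3)) m) := fun m => gsw (A (⁅x1, x2⁆)) (A (x3)) m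
  have sw1 : ∀ m : H1, S (A (x4)) (l2m (A (⁅x1, x2⁆)) m) = -S (A (⁅x1, x2⁆)) (l2m (A (x4)) m) := fun m => gsw (A (⁅x1, x2⁆)) (A (x4)) m
  have sw2 : ∀ m : H1, S (A (x5)) (l2m (A (⁅x1, x2⁆)) m) = -S (A (⁅x1, x2⁆)) (l2m (A (x5)) m) := fun m => gsw (A (⁅x1, x2⁆)) (A (x5)) m
  have sw3 : ∀ m : H1, S (A (x2)) (l2m (A (⁅x1, x3⁆)) m) = -S (A (⁅x1, x3⁆)) (l2m (A (x2)) m) := fun m => gsw (A (⁅x1, x3⁆)) (A (x2)) m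
  have sw4 : ∀ m : H1, S (A (x4)) (l2m (A (⁅x1, x3⁆)) m) = -S (A (⁅x1, x3⁆)) (l2m (A (x4)) m) := fun m => gsw (A (⁅x1, x3⁆)) (A (x4)) m
  have sw5 : ∀ m : H1, S (A (x5)) (l2m (A (⁅x1, x3⁆)) m) = -S (A (⁅x1, x3⁆)) (l2m (A (x5)) m) := fun m => gsw (A (⁅x1, x3⁆)) (A (x5)) m
  have sw6 : ∀ m : H1, S (A (x2)) (l2m (A (⁅x1, x4⁆)) m) = -S (A (⁅x1, x4⁆)) (l2m (A (x2)) m) := fun m => gsw (A (⁅x1, x4⁆)) (A (x2)) m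
  have sw7 : ∀ m : H1, S (A (x3)) (l2m (A (⁅x1, x4⁆)) m) = -S (A (⁅x1, x4⁆)) (l2m (A (x3)) m) := fun m => gsw (A (⁅x1, x4⁆)) (A (x3)) m
  have sw8 : ∀ m : H1, S (A (x5)) (l2m (A (⁅x1, x4⁆)) m) = -S (A (⁅x1, x4⁆)) (l2m (A (x5)) m) := fun m => gsw (A (⁅x1, x4⁆)) (A (x5)) m
  have sw9 : ∀ m : H1, S (A (x2)) (l2m (A (⁅x1, x5⁆)) m) = -S (A (⁅x1, x5⁆)) (l2m (A (x2)) m) := fun m => gsw (A (⁅x1, x5⁆)) (A (x2)) m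
  have sw10 : ∀ m : H1, S (A (x3)) (l2m (A (⁅x1, x5⁆)) m) = -S (A (⁅x1, x5⁆)) (l2m (A (x3)) m) := fun m => gsw (A (⁅x1, x5⁆)) (A (x3)) m
  have sw11 : ∀ m : H1, S (A (x4)) (l2m (A (⁅x1, x5⁆)) m) = -S (A (⁅x1, x5⁆)) (l2m (A (x4)) m) := fun m => gsw (A (⁅x1, x5⁆)) (A (x4)) m
  have sw12 : ∀ m : H1, S (A (x4)) (l2m (A (⁅x2, x3⁆)) m) = -S (A (⁅x2, x3⁆)) (l2m (A (x4)) m) := fun m => gsw (A (⁅x2, x3⁆)) (A (x4)) m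
  have sw13 : ∀ m : H1, S (A (x5)) (l2m (A (⁅x2, x3⁆)) m) = -S (A (⁅x2, x3⁆)) (l2m (A (x5)) m) := fun m => gsw (A (⁅x2, x3⁆)) (A (x5)) m
  have sw14 : ∀ m : H1, S (A (x3)) (l2m (A (⁅x2, x4⁆)) m) = -S (A (⁅x2, x4⁆)) (l2m (A (x3)) m) := fun m => gsw (A (⁅x2, x4⁆)) (A (x3)) m
  have sw15 : ∀ m : H1, S (A (x5)) (l2m (A (⁅x2, x4⁆)) m) = -S (A (⁅x2, x4⁆)) (l2m (A (x5)) m) := fun m => gsw (A (⁅x2, x4⁆)) (A (x5)) m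
  have sw16 : ∀ m : H1, S (A (x3)) (l2m (A (⁅x2, x5⁆)) m) = -S (A (⁅x2, x5⁆)) (l2m (A (x3)) m) := fun m => gsw (A (⁅x2, x5⁆)) (A (x3)) m
  have sw17 : ∀ m : H1, S (A (x4)) (l2m (A (⁅x2, x5⁆)) m) = -S (A (⁅x2, x5⁆)) (l2m (A (x4)) m) := fun m => gsw (A (⁅x2, x5⁆)) (A (x4)) m
  have sw18 : ∀ m : H1, S (A (x5)) (l2m (A (⁅x3, x4⁆)) m) = -S (A (⁅x3, x4⁆)) (l2m (A (x5)) m) := fun m => gsw (A (⁅x3, x4⁆)) (A (x5)) m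
  have sw19 : ∀ m : H1, S (A (x4)) (l2m (A (⁅x3, x5⁆)) m) = -S (A (⁅x3, x5⁆)) (l2m (A (x4)) m) := fun m => gsw (A (⁅x3, x5⁆)) (A (x4)) m
  have sw20 : ∀ m : H1, S (A (x2)) (l2m (A (x1)) m) = -S (A (x1)) (l2m (A (x2)) m) := fun m => gsw (A (x1)) (A (x2)) m
  have sw21 : ∀ m : H1, S (A (x3)) (l2m (A (x1)) m) = -S (A (x1)) (l2m (A (x3)) m) := fun m => gsw (A (x1)) (A (x3)) m
  have sw22 : ∀ m : H1, S (A (x4)) (l2m (A (x1)) m) = -S (A (x1)) (l2m (A (x4)) m) := fun m => gsw (A (x1)) (A (x4)) m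
  have sw23 : ∀ m : H1, S (A (x5)) (l2m (A (x1)) m) = -S (A (x1)) (l2m (A (x5)) m) := fun m => gsw (A (x1)) (A (x5)) m
  have sw24 : ∀ m : H1, S (L0 (x2) (A (x3))) (l2m (A (x1)) m) = -S (A (x1)) (l2m (L0 (x2) (A (x3))) m) := fun m => gsw (A (x1)) (L0 (x2) (A (x3))) m
  have sw25 : ∀ m : H1, S (L0 (x2) (A (x4))) (l2m (A (x1)) m) = -S (A (x1)) (l2m (L0 (x2) (A (x4))) m) := fun m => gsw (A (x1)) (L0 (x2) (A (x4))) m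
  have sw26 : ∀ m : H1, S (L0 (x2) (A (x5))) (l2m (A (x1)) m) = -S (A (x1)) (l2m (L0 (x2) (A (x5))) m) := fun m => gsw (A (x1)) (L0 (x2) (A (x5))) m
  have sw27 : ∀ m : H1, S (L0 (x3) (A (x2))) (l2m (A (x1)) m) = -S (A (x1)) (l2m (L0 (x3) (A (x2))) m) := fun m => gsw (A (x1)) (L0 (x3) (A (x2))) m
  have sw28 : ∀ m : H1, S (L0 (x3) (A (x4))) (l2m (A (x1)) m) = -S (A (x1)) (l2m (L0 (x3) (A (x4))) m) := fun m => gsw (A (x1)) (L0 (x3) (A (x4))) m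
  have sw29 : ∀ m : H1, S (L0 (x3) (A (x5))) (l2m (A (x1)) m) = -S (A (x1)) (l2m (L0 (x3) (A (x5))) m) := fun m => gsw (A (x1)) (L0 (x3) (A (x5))) m
  have sw30 : ∀ m : H1, S (L0 (x4) (A (x2))) (l2m (A (x1)) m) = -S (A (x1)) (l2m (L0 (x4) (A (x2))) m) := fun m => gsw (A (x1)) (L0 (x4) (A (x2))) m
  have sw31 : ∀ m : H1, S (L0 (x4) (A (x3))) (l2m (A (x1)) m) = -S (A (x1)) (l2m (L0 (x4) (A (x3))) m) := fun m => gsw (A (x1)) (L0 (x4) (A (x3))) m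
  have sw32 : ∀ m : H1, S (L0 (x4) (A (x5))) (l2m (A (x1)) m) = -S (A (x1)) (l2m (L0 (x4) (A (x5))) m) := fun m => gsw (A (x1)) (L0 (x4) (A (x5))) m
  have sw33 : ∀ m : H1, S (L0 (x5) (A (x2))) (l2m (A (x1)) m) = -S (A (x1)) (l2m (L0 (x5) (A (x2))) m) := fun m => gsw (A (x1)) (L0 (x5) (A (x2))) m
  have sw34 : ∀ m : H1, S (L0 (x5) (A (x3))) (l2m (A (x1)) m) = -S (A (x1)) (l2m (L0 (x5) (A (x3))) m) := fun m => gsw (A (x1)) (L0 (x5) (A (x3))) m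
  have sw35 : ∀ m : H1, S (L0 (x5) (A (x4))) (l2m (A (x1)) m) = -S (A (x1)) (l2m (L0 (x5) (A (x4))) m) := fun m => gsw (A (x1)) (L0 (x5) (A (x4))) m
  have sw36 : ∀ m : H1, S (l1 (B (x2) (x3))) (l2m (A (x1)) m) = -S (A (x1)) (l2m (l1 (B (x2) (x3))) m) := fun m => gsw (A (x1)) (l1 (B (x2) (x3))) m
  have sw37 : ∀ m : H1, S (l1 (B (x2) (x4))) (l2m (A (x1)) m) = -S (A (x1)) (l2m (l1 (B (x2) (x4))) m) := fun m => gsw (A (x1)) (l1 (B (x2) (x4))) m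
  have sw38 : ∀ m : H1, S (l1 (B (x2) (x5))) (l2m (A (x1)) m) = -S (A (x1)) (l2m (l1 (B (x2) (x5))) m) := fun m => gsw (A (x1)) (l1 (B (x2) (x5))) m
  have sw39 : ∀ m : H1, S (l1 (B (x3) (x4))) (l2m (A (x1)) m) = -S (A (x1)) (l2m (l1 (B (x3) (x4))) m) := fun m => gsw (A (x1)) (l1 (B (x3) (x4))) m
  have sw40 : ∀ m : H1, S (l1 (B (x3) (x5))) (l2m (A (x1)) m) = -S (A (x1)) (l2m (l1 (B (x3) (x5))) m) := fun m => gsw (A (x1)) (l1 (B (x3) (x5))) m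
  have sw41 : ∀ m : H1, S (l1 (B (x4) (x5))) (l2m (A (x1)) m) = -S (A (x1)) (l2m (l1 (B (x4) (x5))) m) := fun m => gsw (A (x1)) (l1 (B (x4) (x5))) m
  have sw42 : ∀ m : H1, S (A (x3)) (l2m (A (x2)) m) = -S (A (x2)) (l2m (A (x3)) m) := fun m => gsw (A (x2)) (A (x3)) m
  have sw43 : ∀ m : H1, S (A (x4)) (l2m (A (x2)) m) = -S (A (x2)) (l2m (A (x4)) m) := fun m => gsw (A (x2)) (A (x4)) m
  have sw44 : ∀ m : H1, S (A (x5)) (l2m (A (x2)) m) = -S (A (x2)) (l2m (A (x5)) m) := fun m => gsw (A (x2)) (A (x5)) m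
  have sw45 : ∀ m : H1, S (L0 (x1) (A (x3))) (l2m (A (x2)) m) = -S (A (x2)) (l2m (L0 (x1) (A (x3))) m) := fun m => gsw (A (x2)) (L0 (x1) (A (x3))) m
  have sw46 : ∀ m : H1, S (L0 (x1) (A (x4))) (l2m (A (x2)) m) = -S (A (x2)) (l2m (L0 (x1) (A (x4))) m) := fun m => gsw (A (x2)) (L0 (x1) (A (x4))) m
  have sw47 : ∀ m : H1, S (L0 (x1) (A (x5))) (l2m (A (x2)) m) = -S (A (x2)) (l2m (L0 (x1) (A (x5))) m) := fun m => gsw (A (x2)) (L0 (x1) (A (x5))) m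
  have sw48 : ∀ m : H1, S (L0 (x3) (A (x1))) (l2m (A (x2)) m) = -S (A (x2)) (l2m (L0 (x3) (A (x1))) m) := fun m => gsw (A (x2)) (L0 (x3) (A (x1))) m
  have sw49 : ∀ m : H1, S (L0 (x3) (A (x4))) (l2m (A (x2)) m) = -S (A (x2)) (l2m (L0 (x3) (A (x4))) m) := fun m => gsw (A (x2)) (L0 (x3) (A (x4))) m
  have sw50 : ∀ m : H1, S (L0 (x3) (A (x5))) (l2m (A (x2)) m) = -S (A (x2)) (l2m (L0 (x3) (A (x5))) m) := fun m => gsw (A (x2)) (L0 (x3) (A (x5))) m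
  have sw51 : ∀ m : H1, S (L0 (x4) (A (x1))) (l2m (A (x2)) m) = -S (A (x2)) (l2m (L0 (x4) (A (x1))) m) := fun m => gsw (A (x2)) (L0 (x4) (A (x1))) m
  have sw52 : ∀ m : H1, S (L0 (x4) (A (x3))) (l2m (A (x2)) m) = -S (A (x2)) (l2m (L0 (x4) (A (x3))) m) := fun m => gsw (A (x2)) (L0 (x4) (A (x3))) m
  have sw53 : ∀ m : H1, S (L0 (x4) (A (x5))) (l2m (A (x2)) m) = -S (A (x2)) (l2m (L0 (x4) (A (x5))) m) := fun m => gsw (A (x2)) (L0 (x4) (A (x5))) m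
  have sw54 : ∀ m : H1, S (L0 (x5) (A (x1))) (l2m (A (x2)) m) = -S (A (x2)) (l2m (L0 (x5) (A (x1))) m) := fun m => gsw (A (x2)) (L0 (x5) (A (x1))) m
  have sw55 : ∀ m : H1, S (L0 (x5) (A (x3))) (l2m (A (x2)) m) = -S (A (x2)) (l2m (L0 (x5) (A (x3))) m) := fun m => gsw (A (x2)) (L0 (x5) (A (x3))) m
  have sw56 : ∀ m : H1, S (L0 (x5) (A (x4))) (l2m (A (x2)) m) = -S (A (x2)) (l2m (L0 (x5) (A (x4))) m) := fun m => gsw (A (x2)) (L0 (x5) (A (x4))) m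
  have sw57 : ∀ m : H1, S (l1 (B (x1) (x3))) (l2m (A (x2)) m) = -S (A (x2)) (l2m (l1 (B (x1) (x3))) m) := fun m => gsw (A (x2)) (l1 (B (x1) (x3))) m
  have sw58 : ∀ m : H1, S (l1 (B (x1) (x4))) (l2m (A (x2)) m) = -S (A (x2)) (l2m (l1 (B (x1) (x4))) m) := fun m => gsw (A (x2)) (l1 (B (x1) (x4))) m
  have sw59 : ∀ m : H1, S (l1 (B (x1) (x5))) (l2m (A (x2)) m) = -S (A (x2)) (l2m (l1 (B (x1) (x5))) m) := fun m => gsw (A (x2)) (l1 (B (x1) (x5))) m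
  have sw60 : ∀ m : H1, S (l1 (B (x3) (x4))) (l2m (A (x2)) m) = -S (A (x2)) (l2m (l1 (B (x3) (x4))) m) := fun m => gsw (A (x2)) (l1 (B (x3) (x4))) m
  have sw61 : ∀ m : H1, S (l1 (B (x3) (x5))) (l2m (A (x2)) m) = -S (A (x2)) (l2m (l1 (B (x3) (x5))) m) := fun m => gsw (A (x2)) (l1 (B (x3) (x5))) m
  have sw62 : ∀ m : H1, S (l1 (B (x4) (x5))) (l2m (A (x2)) m) = -S (A (x2)) (l2m (l1 (B (x4) (x5))) m) := fun m => gsw (A (x2)) (l1 (B (x4) (x5))) m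
  have sw63 : ∀ m : H1, S (A (x4)) (l2m (A (x3)) m) = -S (A (x3)) (l2m (A (x4)) m) := fun m => gsw (A (x3)) (A (x4)) m
  have sw64 : ∀ m : H1, S (A (x5)) (l2m (A (x3)) m) = -S (A (x3)) (l2m (A (x5)) m) := fun m => gsw (A (x3)) (A (x5)) m
  have sw65 : ∀ m : H1, S (L0 (x1) (A (x2))) (l2m (A (x3)) m) = -S (A (x3)) (l2m (L0 (x1) (A (x2))) m) := fun m => gsw (A (x3)) (L0 (x1) (A (x2))) m
  have sw66 : ∀ m : H1, S (L0 (x1) (A (x4))) (l2m (A (x3)) m) = -S (A (x3)) (l2m (L0 (x1) (A (x4))) m) := fun m => gsw (A (x3)) (L0 (x1) (A (x4))) m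
  have sw67 : ∀ m : H1, S (L0 (x1) (A (x5))) (l2m (A (x3)) m) = -S (A (x3)) (l2m (L0 (x1) (A (x5))) m) := fun m => gsw (A (x3)) (L0 (x1) (A (x5))) m
  have sw68 : ∀ m : H1, S (L0 (x2) (A (x1))) (l2m (A (x3)) m) = -S (A (x3)) (l2m (L0 (x2) (A (x1))) m) := fun m => gsw (A (x3)) (L0 (x2) (A (x1))) m
  have sw69 : ∀ m : H1, S (L0 (x2) (A (x4))) (l2m (A (x3)) m) = -S (A (x3)) (l2m (L0 (x2) (A (x4))) m) := fun m => gsw (A (x3)) (L0 (x2) (A (x4))) m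
  have sw70 : ∀ m : H1, S (L0 (x2) (A (x5))) (l2m (A (x3)) m) = -S (A (x3)) (l2m (L0 (x2) (A (x5))) m) := fun m => gsw (A (x3)) (L0 (x2) (A (x5))) m
  have sw71 : ∀ m : H1, S (L0 (x4) (A (x1))) (l2m (A (x3)) m) = -S (A (x3)) (l2m (L0 (x4) (A (x1))) m) := fun m => gsw (A (x3)) (L0 (x4) (A (x1))) m
  have sw72 : ∀ m : H1, S (L0 (x4) (A (x2))) (l2m (A (x3)) m) = -S (A (x3)) (l2m (L0 (x4) (A (x2))) m) := fun m => gsw (A (x3)) (L0 (x4) (A (x2))) m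
  have sw73 : ∀ m : H1, S (L0 (x4) (A (x5))) (l2m (A (x3)) m) = -S (A (x3)) (l2m (L0 (x4) (A (x5))) m) := fun m => gsw (A (x3)) (L0 (x4) (A (x5))) m
  have sw74 : ∀ m : H1, S (L0 (x5) (A (x1))) (l2m (A (x3)) m) = -S (A (x3)) (l2m (L0 (x5) (A (x1))) m) := fun m => gsw (A (x3)) (L0 (x5) (A (x1))) m
  have sw75 : ∀ m : H1, S (L0 (x5) (A (x2))) (l2m (A (x3)) m) = -S (A (x3)) (l2m (L0 (x5) (A (x2))) m) := fun m => gsw (A (x3)) (L0 (x5) (A (x2))) m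
  have sw76 : ∀ m : H1, S (L0 (x5) (A (x4))) (l2m (A (x3)) m) = -S (A (x3)) (l2m (L0 (x5) (A (x4))) m) := fun m => gsw (A (x3)) (L0 (x5) (A (x4))) m
  have sw77 : ∀ m : H1, S (l1 (B (x1) (x2))) (l2m (A (x3)) m) = -S (A (x3)) (l2m (l1 (B (x1) (x2))) m) := fun m => gsw (A (x3)) (l1 (B (x1) (x2))) m
  have sw78 : ∀ m : H1, S (l1 (B (x1) (x4))) (l2m (A (x3)) m) = -S (A (x3)) (l2m (l1 (B (x1) (x4))) m) := fun m => gsw (A (x3)) (l1 (B (x1) (x4))) m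
  have sw79 : ∀ m : H1, S (l1 (B (x1) (x5))) (l2m (A (x3)) m) = -S (A (x3)) (l2m (l1 (B (x1) (x5))) m) := fun m => gsw (A (x3)) (l1 (B (x1) (x5))) m
  have sw80 : ∀ m : H1, S (l1 (B (x2) (x4))) (l2m (A (x3)) m) = -S (A (x3)) (l2m (l1 (B (x2) (x4))) m) := fun m => gsw (A (x3)) (l1 (B (x2) (x4))) m
  have sw81 : ∀ m : H1, S (l1 (B (x2) (x5))) (l2m (A (x3)) m) = -S (A (x3)) (l2m (l1 (B (x2) (x5))) m) := fun m => gsw (A (x3)) (l1 (B (x2) (x5))) m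
  have sw82 : ∀ m : H1, S (l1 (B (x4) (x5))) (l2m (A (x3)) m) = -S (A (x3)) (l2m (l1 (B (x4) (x5))) m) := fun m => gsw (A (x3)) (l1 (B (x4) (x5))) m
  have sw83 : ∀ m : H1, S (A (x5)) (l2m (A (x4)) m) = -S (A (x4)) (l2m (A (x5)) m) := fun m => gsw (A (x4)) (A (x5)) m
  have sw84 : ∀ m : H1, S (L0 (x1) (A (x2))) (l2m (A (x4)) m) = -S (A (x4)) (l2m (L0 (x1) (A (x2))) m) := fun m => gsw (A (x4)) (L0 (x1) (A (x2))) m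
  have sw85 : ∀ m : H1, S (L0 (x1) (A (x3))) (l2m (A (x4)) m) = -S (A (x4)) (l2m (L0 (x1) (A (x3))) m) := fun m => gsw (A (x4)) (L0 (x1) (A (x3))) m
  have sw86 : ∀ m : H1, S (L0 (x1) (A (x5))) (l2m (A (x4)) m) = -S (A (x4)) (l2m (L0 (x1) (A (x5))) m) := fun m => gsw (A (x4)) (L0 (x1) (A (x5))) m
  have sw87 : ∀ m : H1, S (L0 (x2) (A (x1))) (l2m (A (x4)) m) = -S (A (x4)) (l2m (L0 (x2) (A (x1))) m) := fun m => gsw (A (x4)) (L0 (x2) (A (x1))) m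
  have sw88 : ∀ m : H1, S (L0 (x2) (A (x3))) (l2m (A (x4)) m) = -S (A (x4)) (l2m (L0 (x2) (A (x3))) m) := fun m => gsw (A (x4)) (L0 (x2) (A (x3))) m
  have sw89 : ∀ m : H1, S (L0 (x2) (A (x5))) (l2m (A (x4)) m) = -S (A (x4)) (l2m (L0 (x2) (A (x5))) m) := fun m => gsw (A (x4)) (L0 (x2) (A (x5))) m
  have sw90 : ∀ m : H1, S (L0 (x3) (A (x1))) (l2m (A (x4)) m) = -S (A (x4)) (l2m (L0 (x3) (A (x1))) m) := fun m => gsw (A (x4)) (L0 (x3) (A (x1))) m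
  have sw91 : ∀ m : H1, S (L0 (x3) (A (x2))) (l2m (A (x4)) m) = -S (A (x4)) (l2m (L0 (x3) (A (x2))) m) := fun m => gsw (A (x4)) (L0 (x3) (A (x2))) m
  have sw92 : ∀ m : H1, S (L0 (x3) (A (x5))) (l2m (A (x4)) m) = -S (A (x4)) (l2m (L0 (x3) (A (x5))) m) := fun m => gsw (A (x4)) (L0 (x3) (A (x5))) m
  have sw93 : ∀ m : H1, S (L0 (x5) (A (x1))) (l2m (A (x4)) m) = -S (A (x4)) (l2m (L0 (x5) (A (x1))) m) := fun m => gsw (A (x4)) (L0 (x5) (A (x1))) m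
  have sw94 : ∀ m : H1, S (L0 (x5) (A (x2))) (l2m (A (x4)) m) = -S (A (x4)) (l2m (L0 (x5) (A (x2))) m) := fun m => gsw (A (x4)) (L0 (x5) (A (x2))) m
  have sw95 : ∀ m : H1, S (L0 (x5) (A (x3))) (l2m (A (x4)) m) = -S (A (x4)) (l2m (L0 (x5) (A (x3))) m) := fun m => gsw (A (x4)) (L0 (x5) (A (x3))) m
  have sw96 : ∀ m : H1, S (l1 (B (x1) (x2))) (l2m (A (x4)) m) = -S (A (x4)) (l2m (l1 (B (x1) (x2))) m) := fun m => gsw (A (x4)) (l1 (B (x1) (x2))) m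
  have sw97 : ∀ m : H1, S (l1 (B (x1) (x3))) (l2m (A (x4)) m) = -S (A (x4)) (l2m (l1 (B (x1) (x3))) m) := fun m => gsw (A (x4)) (l1 (B (x1) (x3))) m
  have sw98 : ∀ m : H1, S (l1 (B (x1) (x5))) (l2m (A (x4)) m) = -S (A (x4)) (l2m (l1 (B (x1) (x5))) m) := fun m => gsw (A (x4)) (l1 (B (x1) (x5))) m
  have sw99 : ∀ m : H1, S (l1 (B (x2) (x3))) (l2m (A (x4)) m) = -S (A (x4)) (l2m (l1 (B (x2) (x3))) m) := fun m => gsw (A (x4)) (l1 (B (x2) (x3))) m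
  have sw100 : ∀ m : H1, S (l1 (B (x2) (x5))) (l2m (A (x4)) m) = -S (A (x4)) (l2m (l1 (B (x2) (x5))) m) := fun m => gsw (A (x4)) (l1 (B (x2) (x5))) m
  have sw101 : ∀ m : H1, S (l1 (B (x3) (x5))) (l2m (A (x4)) m) = -S (A (x4)) (l2m (l1 (B (x3) (x5))) m) := fun m => gsw (A (x4)) (l1 (B (x3) (x5))) m
  have sw102 : ∀ m : H1, S (L0 (x1) (A (x2))) (l2m (A (x5)) m) = -S (A (x5)) (l2m (L0 (x1) (A (x2))) m) := fun m => gsw (A (x5)) (L0 (x1) (A (x2))) m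
  have sw103 : ∀ m : H1, S (L0 (x1) (A (x3))) (l2m (A (x5)) m) = -S (A (x5)) (l2m (L0 (x1) (A (x3))) m) := fun m => gsw (A (x5)) (L0 (x1) (A (x3))) m
  have sw104 : ∀ m : H1, S (L0 (x1) (A (x4))) (l2m (A (x5)) m) = -S (A (x5)) (l2m (L0 (x1) (A (x4))) m) := fun m => gsw (A (x5)) (L0 (x1) (A (x4))) m
  have sw105 : ∀ m : H1, S (L0 (x2) (A (x1))) (l2m (A (x5)) m) = -S (A (x5)) (l2m (L0 (x2) (A (x1))) m) := fun m => gsw (A (x5)) (L0 (x2) (A (x1))) m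
  have sw106 : ∀ m : H1, S (L0 (x2) (A (x3))) (l2m (A (x5)) m) = -S (A (x5)) (l2m (L0 (x2) (A (x3))) m) := fun m => gsw (A (x5)) (L0 (x2) (A (x3))) m
  have sw107 : ∀ m : H1, S (L0 (x2) (A (x4))) (l2m (A (x5)) m) = -S (A (x5)) (l2m (L0 (x2) (A (x4))) m) := fun m => gsw (A (x5)) (L0 (x2) (A (x4))) m
  have sw108 : ∀ m : H1, S (L0 (x3) (A (x1))) (l2m (A (x5)) m) = -S (A (x5)) (l2m (L0 (x3) (A (x1))) m) := fun m => gsw (A (x5)) (L0 (x3) (A (x1))) m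
  have sw109 : ∀ m : H1, S (L0 (x3) (A (x2))) (l2m (A (x5)) m) = -S (A (x5)) (l2m (L0 (x3) (A (x2))) m) := fun m => gsw (A (x5)) (L0 (x3) (A (x2))) m
  have sw110 : ∀ m : H1, S (L0 (x3) (A (x4))) (l2m (A (x5)) m) = -S (A (x5)) (l2m (L0 (x3) (A (x4))) m) := fun m => gsw (A (x5)) (L0 (x3) (A (x4))) m
  have sw111 : ∀ m : H1, S (L0 (x4) (A (x1))) (l2m (A (x5)) m) = -S (A (x5)) (l2m (L0 (x4) (A (x1))) m) := fun m => gsw (A (x5)) (L0 (x4) (A (x1))) m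
  have sw112 : ∀ m : H1, S (L0 (x4) (A (x2))) (l2m (A (x5)) m) = -S (A (x5)) (l2m (L0 (x4) (A (x2))) m) := fun m => gsw (A (x5)) (L0 (x4) (A (x2))) m
  have sw113 : ∀ m : H1, S (L0 (x4) (A (x3))) (l2m (A (x5)) m) = -S (A (x5)) (l2m (L0 (x4) (A (x3))) m) := fun m => gsw (A (x5)) (L0 (x4) (A (x3))) m
  have sw114 : ∀ m : H1, S (l1 (B (x1) (x2))) (l2m (A (x5)) m) = -S (A (x5)) (l2m (l1 (B (x1) (x2))) m) := fun m => gsw (A (x5)) (l1 (B (x1) (x2))) m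
  have sw115 : ∀ m : H1, S (l1 (B (x1) (x3))) (l2m (A (x5)) m) = -S (A (x5)) (l2m (l1 (B (x1) (x3))) m) := fun m => gsw (A (x5)) (l1 (B (x1) (x3))) m
  have sw116 : ∀ m : H1, S (l1 (B (x1) (x4))) (l2m (A (x5)) m) = -S (A (x5)) (l2m (l1 (B (x1) (x4))) m) := fun m => gsw (A (x5)) (l1 (B (x1) (x4))) m
  have sw117 : ∀ m : H1, S (l1 (B (x2) (x3))) (l2m (A (x5)) m) = -S (A (x5)) (l2m (l1 (B (x2) (x3))) m) := fun m => gsw (A (x5)) (l1 (B (x2) (x3))) m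
  have sw118 : ∀ m : H1, S (l1 (B (x2) (x4))) (l2m (A (x5)) m) = -S (A (x5)) (l2m (l1 (B (x2) (x4))) m) := fun m => gsw (A (x5)) (l1 (B (x2) (x4))) m
  have sw119 : ∀ m : H1, S (l1 (B (x3) (x4))) (l2m (A (x5)) m) = -S (A (x5)) (l2m (l1 (B (x3) (x4))) m) := fun m => gsw (A (x5)) (l1 (B (x3) (x4))) m
  have gg0 : ∀ m : H1, S (A (x2)) (l2m (A (x3)) (l2m (A (x1)) m)) = S (A (x1)) (l2m (A (x3)) (l2m (A (x2)) m)) - S (A (x1)) (l2m (A (x2)) (l2m (A (x3)) m)) := fun m => Glem (A (x2)) (A (x3)) (A (x1)) m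
  have gg1 : ∀ m : H1, S (A (x2)) (l2m (A (x4)) (l2m (A (x1)) m)) = S (A (x1)) (l2m (A (x4)) (l2m (A (x2)) m)) - S (A (x1)) (l2m (A (x2)) (l2m (A (x4)) m)) := fun m => Glem (A (x2)) (A (x4)) (A (x1)) m
  have gg2 : ∀ m : H1, S (A (x2)) (l2m (A (x5)) (l2m (A (x1)) m)) = S (A (x1)) (l2m (A (x5)) (l2m (A (x2)) m)) - S (A (x1)) (l2m (A (x2)) (l2m (A (x5)) m)) := fun m => Glem (A (x2)) (A (x5)) (A (x1)) m
  have gg3 : ∀ m : H1, S (A (x3)) (l2m (A (x4)) (l2m (A (x1)) m)) = S (A (x1)) (l2m (A (x4)) (l2m (A (x3)) m)) - S (A (x1)) (l2m (A (x3)) (l2m (A (x4)) m)) := fun m => Glem (A (x3)) (A (x4)) (A (x1)) m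
  have gg4 : ∀ m : H1, S (A (x3)) (l2m (A (x4)) (l2m (A (x2)) m)) = S (A (x2)) (l2m (A (x4)) (l2m (A (x3)) m)) - S (A (x2)) (l2m (A (x3)) (l2m (A (x4)) m)) := fun m => Glem (A (x3)) (A (x4)) (A (x2)) m
  have gg5 : ∀ m : H1, S (A (x3)) (l2m (A (x5)) (l2m (A (x1)) m)) = S (A (x1)) (l2m (A (x5)) (l2m (A (x3)) m)) - S (A (x1)) (l2m (A (x3)) (l2m (A (x5)) m)) := fun m => Glem (A (x3)) (A (x5)) (A (x1)) m
  have gg6 : ∀ m : H1, S (A (x3)) (l2m (A (x5)) (l2m (A (x2)) m)) = S (A (x2)) (l2m (A (x5)) (l2m (A (x3)) m)) - S (A (x2)) (l2m (A (x3)) (l2m (A (x5)) m)) := fun m => Glem (A (x3)) (A (x5)) (A (x2)) m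
  have gg7 : ∀ m : H1, S (A (x4)) (l2m (A (x5)) (l2m (A (x1)) m)) = S (A (x1)) (l2m (A (x5)) (l2m (A (x4)) m)) - S (A (x1)) (l2m (A (x4)) (l2m (A (x5)) m)) := fun m => Glem (A (x4)) (A (x5)) (A (x1)) m
  have gg8 : ∀ m : H1, S (A (x4)) (l2m (A (x5)) (l2m (A (x2)) m)) = S (A (x2)) (l2m (A (x5)) (l2m (A (x4)) m)) - S (A (x2)) (l2m (A (x4)) (l2m (A (x5)) m)) := fun m => Glem (A (x4)) (A (x5)) (A (x2)) m
  have gg9 : ∀ m : H1, S (A (x4)) (l2m (A (x5)) (l2m (A (x3)) m)) = S (A (x3)) (l2m (A (x5)) (l2m (A (x4)) m)) - S (A (x3)) (l2m (A (x4)) (l2m (A (x5)) m)) := fun m => Glem (A (x4)) (A (x5)) (A (x3)) m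
  have c20 : l2m (l1 (B (x3) (x4))) (B (x1) (x2)) = -l2m (l1 (B (x1) (x2))) (B (x3) (x4)) := hchain2 _ _
  have c21 : l2m (l1 (B (x3) (x5))) (B (x1) (x2)) = -l2m (l1 (B (x1) (x2))) (B (x3) (x5)) := hchain2 _ _
  have c22 : l2m (l1 (B (x4) (x5))) (B (x1) (x2)) = -l2m (l1 (B (x1) (x2))) (B (x4) (x5)) := hchain2 _ _
  have c23 : l2m (l1 (B (x2) (x4))) (B (x1) (x3)) = -l2m (l1 (B (x1) (x3))) (B (x2) (x4)) := hchain2 _ _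
  have c24 : l2m (l1 (B (x2) (x5))) (B (x1) (x3)) = -l2m (l1 (B (x1) (x3))) (B (x2) (x5)) := hchain2 _ _
  have c25 : l2m (l1 (B (x4) (x5))) (B (x1) (x3)) = -l2m (l1 (B (x1) (x3))) (B (x4) (x5)) := hchain2 _ _
  have c26 : l2m (l1 (B (x2) (x3))) (B (x1) (x4)) = -l2m (l1 (B (x1) (x4))) (B (x2) (x3)) := hchain2 _ _
  have c27 : l2m (l1 (B (x2) (x5))) (B (x1) (x4)) = -l2m (l1 (B (x1) (x4))) (B (x2) (x5)) := hchain2 _ _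
  have c28 : l2m (l1 (B (x3) (x5))) (B (x1) (x4)) = -l2m (l1 (B (x1) (x4))) (B (x3) (x5)) := hchain2 _ _
  have c29 : l2m (l1 (B (x2) (x3))) (B (x1) (x5)) = -l2m (l1 (B (x1) (x5))) (B (x2) (x3)) := hchain2 _ _
  have c210 : l2m (l1 (B (x2) (x4))) (B (x1) (x5)) = -l2m (l1 (B (x1) (x5))) (B (x2) (x4)) := hchain2 _ _
  have c211 : l2m (l1 (B (x3) (x4))) (B (x1) (x5)) = -l2m (l1 (B (x1) (x5))) (B (x3) (x4)) := hchain2 _ _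
  have c212 : l2m (l1 (B (x4) (x5))) (B (x2) (x3)) = -l2m (l1 (B (x2) (x3))) (B (x4) (x5)) := hchain2 _ _
  have c213 : l2m (l1 (B (x3) (x5))) (B (x2) (x4)) = -l2m (l1 (B (x2) (x4))) (B (x3) (x5)) := hchain2 _ _
  have c214 : l2m (l1 (B (x3) (x4))) (B (x2) (x5)) = -l2m (l1 (B (x2) (x5))) (B (x3) (x4)) := hchain2 _ _
  have sl0 : S (l1 (B (x4) (x5))) (B (⁅x1, x2⁆) (x3)) = S (l1 (B (⁅x1, x2⁆) (x3))) (B (x4) (x5)) := hSl1 _ _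
  have sl1 : S (l1 (B (x3) (x5))) (B (⁅x1, x2⁆) (x4)) = S (l1 (B (⁅x1, x2⁆) (x4))) (B (x3) (x5)) := hSl1 _ _
  have sl2 : S (l1 (B (x3) (x4))) (B (⁅x1, x2⁆) (x5)) = S (l1 (B (⁅x1, x2⁆) (x5))) (B (x3) (x4)) := hSl1 _ _
  have sl3 : S (l1 (B (x4) (x5))) (B (⁅x1, x3⁆) (x2)) = S (l1 (B (⁅x1, x3⁆) (x2))) (B (x4) (x5)) := hSl1 _ _
  have sl4 : S (l1 (B (x2) (x5))) (B (⁅x1, x3⁆) (x4)) = S (l1 (B (⁅x1, x3⁆) (x4))) (B (x2) (x5)) := hSl1 _ _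
  have sl5 : S (l1 (B (x2) (x4))) (B (⁅x1, x3⁆) (x5)) = S (l1 (B (⁅x1, x3⁆) (x5))) (B (x2) (x4)) := hSl1 _ _
  have sl6 : S (l1 (B (x3) (x5))) (B (⁅x1, x4⁆) (x2)) = S (l1 (B (⁅x1, x4⁆) (x2))) (B (x3) (x5)) := hSl1 _ _
  have sl7 : S (l1 (B (x2) (x5))) (B (⁅x1, x4⁆) (x3)) = S (l1 (B (⁅x1, x4⁆) (x3))) (B (x2) (x5)) := hSl1 _ _
  have sl8 : S (l1 (B (x2) (x3))) (B (⁅x1, x4⁆) (x5)) = S (l1 (B (⁅x1, x4⁆) (x5))) (B (x2) (x3)) := hSl1 _ _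
  have sl9 : S (l1 (B (x3) (x4))) (B (⁅x1, x5⁆) (x2)) = S (l1 (B (⁅x1, x5⁆) (x2))) (B (x3) (x4)) := hSl1 _ _
  have sl10 : S (l1 (B (x2) (x4))) (B (⁅x1, x5⁆) (x3)) = S (l1 (B (⁅x1, x5⁆) (x3))) (B (x2) (x4)) := hSl1 _ _
  have sl11 : S (l1 (B (x2) (x3))) (B (⁅x1, x5⁆) (x4)) = S (l1 (B (⁅x1, x5⁆) (x4))) (B (x2) (x3)) := hSl1 _ _
  have sl12 : S (l1 (B (x4) (x5))) (B (⁅x2, x3⁆) (x1)) = S (l1 (B (⁅x2, x3⁆) (x1))) (B (x4) (x5)) := hSl1 _ _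
  have sl13 : S (l1 (B (x1) (x5))) (B (⁅x2, x3⁆) (x4)) = S (l1 (B (⁅x2, x3⁆) (x4))) (B (x1) (x5)) := hSl1 _ _
  have sl14 : S (l1 (B (x1) (x4))) (B (⁅x2, x3⁆) (x5)) = S (l1 (B (⁅x2, x3⁆) (x5))) (B (x1) (x4)) := hSl1 _ _
  have sl15 : S (l1 (B (x3) (x5))) (B (⁅x2, x4⁆) (x1)) = S (l1 (B (⁅x2, x4⁆) (x1))) (B (x3) (x5)) := hSl1 _ _
  have sl16 : S (l1 (B (x1) (x5))) (B (⁅x2, x4⁆) (x3)) = S (l1 (B (⁅x2, x4⁆) (x3))) (B (x1) (x5)) := hSl1 _ _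
  have sl17 : S (l1 (B (x1) (x3))) (B (⁅x2, x4⁆) (x5)) = S (l1 (B (⁅x2, x4⁆) (x5))) (B (x1) (x3)) := hSl1 _ _
  have sl18 : S (l1 (B (x3) (x4))) (B (⁅x2, x5⁆) (x1)) = S (l1 (B (⁅x2, x5⁆) (x1))) (B (x3) (x4)) := hSl1 _ _
  have sl19 : S (l1 (B (x1) (x4))) (B (⁅x2, x5⁆) (x3)) = S (l1 (B (⁅x2, x5⁆) (x3))) (B (x1) (x4)) := hSl1 _ _
  have sl20 : S (l1 (B (x1) (x3))) (B (⁅x2, x5⁆) (x4)) = S (l1 (B (⁅x2, x5⁆) (x4))) (B (x1) (x3)) := hSl1 _ _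
  have sl21 : S (l1 (B (x2) (x5))) (B (⁅x3, x4⁆) (x1)) = S (l1 (B (⁅x3, x4⁆) (x1))) (B (x2) (x5)) := hSl1 _ _
  have sl22 : S (l1 (B (x1) (x5))) (B (⁅x3, x4⁆) (x2)) = S (l1 (B (⁅x3, x4⁆) (x2))) (B (x1) (x5)) := hSl1 _ _
  have sl23 : S (l1 (B (x1) (x2))) (B (⁅x3, x4⁆) (x5)) = S (l1 (B (⁅x3, x4⁆) (x5))) (B (x1) (x2)) := hSl1 _ _
  have sl24 : S (l1 (B (x2) (x4))) (B (⁅x3, x5⁆) (x1)) = S (l1 (B (⁅x3, x5⁆) (x1))) (B (x2) (x4)) := hSl1 _ _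
  have sl25 : S (l1 (B (x1) (x4))) (B (⁅x3, x5⁆) (x2)) = S (l1 (B (⁅x3, x5⁆) (x2))) (B (x1) (x4)) := hSl1 _ _
  have sl26 : S (l1 (B (x1) (x2))) (B (⁅x3, x5⁆) (x4)) = S (l1 (B (⁅x3, x5⁆) (x4))) (B (x1) (x2)) := hSl1 _ _
  have sl27 : S (l1 (B (x2) (x3))) (B (⁅x4, x5⁆) (x1)) = S (l1 (B (⁅x4, x5⁆) (x1))) (B (x2) (x3)) := hSl1 _ _
  have sl28 : S (l1 (B (x1) (x3))) (B (⁅x4, x5⁆) (x2)) = S (l1 (B (⁅x4, x5⁆) (x2))) (B (x1) (x3)) := hSl1 _ _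
  have sl29 : S (l1 (B (x1) (x2))) (B (⁅x4, x5⁆) (x3)) = S (l1 (B (⁅x4, x5⁆) (x3))) (B (x1) (x2)) := hSl1 _ _
  have sl30 : S (l1 (L1 (x3) (B (x4) (x5)))) (B (x1) (x2)) = S (l1 (B (x1) (x2))) (L1 (x3) (B (x4) (x5))) := hSl1 _ _
  have sl31 : S (l1 (L1 (x4) (B (x3) (x5)))) (B (x1) (x2)) = S (l1 (B (x1) (x2))) (L1 (x4) (B (x3) (x5))) := hSl1 _ _
  have sl32 : S (l1 (L1 (x5) (B (x3) (x4)))) (B (x1) (x2)) = S (l1 (B (x1) (x2))) (L1 (x5) (B (x3) (x4))) := hSl1 _ _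
  have sl33 : S (l1 (L1 (x2) (B (x4) (x5)))) (B (x1) (x3)) = S (l1 (B (x1) (x3))) (L1 (x2) (B (x4) (x5))) := hSl1 _ _
  have sl34 : S (l1 (L1 (x4) (B (x2) (x5)))) (B (x1) (x3)) = S (l1 (B (x1) (x3))) (L1 (x4) (B (x2) (x5))) := hSl1 _ _
  have sl35 : S (l1 (L1 (x5) (B (x2) (x4)))) (B (x1) (x3)) = S (l1 (B (x1) (x3))) (L1 (x5) (B (x2) (x4))) := hSl1 _ _
  have sl36 : S (l1 (L1 (x2) (B (x3) (x5)))) (B (x1) (x4)) = S (l1 (B (x1) (x4))) (L1 (x2) (B (x3) (x5))) := hSl1 _ _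
  have sl37 : S (l1 (L1 (x3) (B (x2) (x5)))) (B (x1) (x4)) = S (l1 (B (x1) (x4))) (L1 (x3) (B (x2) (x5))) := hSl1 _ _
  have sl38 : S (l1 (L1 (x5) (B (x2) (x3)))) (B (x1) (x4)) = S (l1 (B (x1) (x4))) (L1 (x5) (B (x2) (x3))) := hSl1 _ _
  have sl39 : S (l1 (L1 (x2) (B (x3) (x4)))) (B (x1) (x5)) = S (l1 (B (x1) (x5))) (L1 (x2) (B (x3) (x4))) := hSl1 _ _
  have sl40 : S (l1 (L1 (x3) (B (x2) (x4)))) (B (x1) (x5)) = S (l1 (B (x1) (x5))) (L1 (x3) (B (x2) (x4))) := hSl1 _ _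
  have sl41 : S (l1 (L1 (x4) (B (x2) (x3)))) (B (x1) (x5)) = S (l1 (B (x1) (x5))) (L1 (x4) (B (x2) (x3))) := hSl1 _ _
  have sl42 : S (l1 (L1 (x1) (B (x4) (x5)))) (B (x2) (x3)) = S (l1 (B (x2) (x3))) (L1 (x1) (B (x4) (x5))) := hSl1 _ _
  have sl43 : S (l1 (L1 (x4) (B (x1) (x5)))) (B (x2) (x3)) = S (l1 (B (x2) (x3))) (L1 (x4) (B (x1) (x5))) := hSl1 _ _
  have sl44 : S (l1 (L1 (x5) (B (x1) (x4)))) (B (x2) (x3)) = S (l1 (B (x2) (x3))) (L1 (x5) (B (x1) (x4))) := hSl1 _ _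
  have sl45 : S (l1 (L1 (x1) (B (x3) (x5)))) (B (x2) (x4)) = S (l1 (B (x2) (x4))) (L1 (x1) (B (x3) (x5))) := hSl1 _ _
  have sl46 : S (l1 (L1 (x3) (B (x1) (x5)))) (B (x2) (x4)) = S (l1 (B (x2) (x4))) (L1 (x3) (B (x1) (x5))) := hSl1 _ _
  have sl47 : S (l1 (L1 (x5) (B (x1) (x3)))) (B (x2) (x4)) = S (l1 (B (x2) (x4))) (L1 (x5) (B (x1) (x3))) := hSl1 _ _
  have sl48 : S (l1 (L1 (x1) (B (x3) (x4)))) (B (x2) (x5)) = S (l1 (B (x2) (x5))) (L1 (x1) (B (x3) (x4))) := hSl1 _ _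
  have sl49 : S (l1 (L1 (x3) (B (x1) (x4)))) (B (x2) (x5)) = S (l1 (B (x2) (x5))) (L1 (x3) (B (x1) (x4))) := hSl1 _ _
  have sl50 : S (l1 (L1 (x4) (B (x1) (x3)))) (B (x2) (x5)) = S (l1 (B (x2) (x5))) (L1 (x4) (B (x1) (x3))) := hSl1 _ _
  have sl51 : S (l1 (L1 (x1) (B (x2) (x5)))) (B (x3) (x4)) = S (l1 (B (x3) (x4))) (L1 (x1) (B (x2) (x5))) := hSl1 _ _
  have sl52 : S (l1 (L1 (x2) (B (x1) (x5)))) (B (x3) (x4)) = S (l1 (B (x3) (x4))) (L1 (x2) (B (x1) (x5))) := hSl1 _ _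
  have sl53 : S (l1 (L1 (x5) (B (x1) (x2)))) (B (x3) (x4)) = S (l1 (B (x3) (x4))) (L1 (x5) (B (x1) (x2))) := hSl1 _ _
  have sl54 : S (l1 (L1 (x1) (B (x2) (x4)))) (B (x3) (x5)) = S (l1 (B (x3) (x5))) (L1 (x1) (B (x2) (x4))) := hSl1 _ _
  have sl55 : S (l1 (L1 (x2) (B (x1) (x4)))) (B (x3) (x5)) = S (l1 (B (x3) (x5))) (L1 (x2) (B (x1) (x4))) := hSl1 _ _
  have sl56 : S (l1 (L1 (x4) (B (x1) (x2)))) (B (x3) (x5)) = S (l1 (B (x3) (x5))) (L1 (x4) (B (x1) (x2))) := hSl1 _ _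
  have sl57 : S (l1 (L1 (x1) (B (x2) (x3)))) (B (x4) (x5)) = S (l1 (B (x4) (x5))) (L1 (x1) (B (x2) (x3))) := hSl1 _ _
  have sl58 : S (l1 (L1 (x2) (B (x1) (x3)))) (B (x4) (x5)) = S (l1 (B (x4) (x5))) (L1 (x2) (B (x1) (x3))) := hSl1 _ _
  have sl59 : S (l1 (L1 (x3) (B (x1) (x2)))) (B (x4) (x5)) = S (l1 (B (x4) (x5))) (L1 (x3) (B (x1) (x2))) := hSl1 _ _
  rw [dNab_five]
  simp only [hFc, hCv, hdB, hP4, Matrix.cons_val_zero, Matrix.cons_val_one,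
    Matrix.head_cons, Matrix.cons_val_two, Matrix.tail_cons, Matrix.cons_val_three,
    hSL, hL1, hL0, hder0, hder1, hcomm, hSinv, lsw,
    map_add, map_sub, map_neg, map_smul, LinearMap.add_apply, LinearMap.sub_apply,
    LinearMap.neg_apply, LinearMap.smul_apply, smul_add, smul_sub, smul_neg, neg_neg,
    jv0,
    jv1,
    jv2,
    jv3,
    jv4,
    jv5,
    jv6,
    jv7,
    jv8,
    jv9,
    bs0,
    bs1,
    bs2,
    bs3,
    bs4,
    bs5,
    bs6,
    bs7,
    bs8,
    bs9,
    bs10,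
    bs11,
    bs12,
    bs13,
    bs14,
    bs15,
    bs16,
    bs17,
    bs18,
    bs19,
    bs20,
    bs21,
    bs22,
    bs23,
    bs24,
    sw0,
    sw1,
    sw2,
    sw3,
    sw4,
    sw5,
    sw6,
    sw7,
    sw8,
    sw9,
    sw10,
    sw11,
    sw12,
    sw13,
    sw14,
    sw15,
    sw16,
    sw17,
    sw18,
    sw19,
    sw20,
    sw21,
    sw22,
    sw23,
    sw24,
    sw25,
    sw26,
    sw27,
    sw28,
    sw29,
    sw30,
    sw31,
    sw32,
    sw33,
    sw34,
    sw35,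
    sw36,
    sw37,
    sw38,
    sw39,
    sw40,
    sw41,
    sw42,
    sw43,
    sw44,
    sw45,
    sw46,
    sw47,
    sw48,
    sw49,
    sw50,
    sw51,
    sw52,
    sw53,
    sw54,
    sw55,
    sw56,
    sw57,
    sw58,
    sw59,
    sw60,
    sw61,
    sw62,
    sw63,
    sw64,
    sw65,
    sw66,
    sw67,
    sw68,
    sw69,
    sw70,
    sw71,
    sw72,
    sw73,
    sw74,
    sw75,
    sw76,
    sw77,
    sw78,
    sw79,
    sw80,
    sw81,
    sw82,
    sw83,
    sw84,
    sw85,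
    sw86,
    sw87,
    sw88,
    sw89,
    sw90,
    sw91,
    sw92,
    sw93,
    sw94,
    sw95,
    sw96,
    sw97,
    sw98,
    sw99,
    sw100,
    sw101,
    sw102,
    sw103,
    sw104,
    sw105,
    sw106,
    sw107,
    sw108,
    sw109,
    sw110,
    sw111,
    sw112,
    sw113,
    sw114,
    sw115,
    sw116,
    sw117,
    sw118,
    sw119,
    gg0,
    gg1,
    gg2,
    gg3,
    gg4,
    gg5,
    gg6,
    gg7,
    gg8,
    gg9,
    c20,
    c21,
    c22,
    c23,
    c24,
    c25,
    c26,
    c27,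
    c28,
    c29,
    c210,
    c211,
    c212,
    c213,
    c214,
    sl0,
    sl1,
    sl2,
    sl3,
    sl4,
    sl5,
    sl6,
    sl7,
    sl8,
    sl9,
    sl10,
    sl11,
    sl12,
    sl13,
    sl14,
    sl15,
    sl16,
    sl17,
    sl18,
    sl19,
    sl20,
    sl21,
    sl22,
    sl23,
    sl24,
    sl25,
    sl26,
    sl27,
    sl28,
    sl29,
    sl30,
    sl31,
    sl32,
    sl33,
    sl34,
    sl35,
    sl36,
    sl37,
    sl38,
    sl39,
    sl40,
    sl41,
    sl42,
    sl43,
    sl44,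
    sl45,
    sl46,
    sl47,
    sl48,
    sl49,
    sl50,
    sl51,
    sl52,
    sl53,
    sl54,
    sl55,
    sl56,
    sl57,
    sl58,
    sl59]
  module
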